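/- Let F be a finite field with q elements. Then there exist an integer v ≥ 2 and a q²-divisible set C of points of PG(v−1, q) with |C| = 3q³ − q² − q − 1 such that the dimension k of the F-linear span of the union of the points of C satisfies max{8, q+5} ≤ k ≤ max{8, 2q+3}. -/

import Mathlib

open scoped Classical

section PGDefs

variable {F : Type} [Field F] {M : Type} [AddCommGroup M] [Module F M]

/-- The number of points of `C` contained in the subspace `S`, i.e. `|C ∩ S|`. -/
noncomputable def interCard (C : Finset (Submodule F M)) (S : Submodule F M) : ℕ :=
  (C.filter (fun P => P ≤ S)).card

/-- `H` is a hyperplane, i.e. a subspace of codimension 1. -/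
def IsHyperplane (H : Submodule F M) : Prop :=
  Module.finrank F ↥H = Module.finrank F M - 1

/-- Every element of `C` is a point, i.e. a 1-dimensional subspace. -/
def IsPointSet (C : Finset (Submodule F M)) : Prop :=
  ∀ P ∈ C, Module.finrank F ↥P = 1

/-- `C` is `Δ`-divisible: `|C ∩ H| ≡ |C| (mod Δ)` for every hyperplane `H`. -/
def DivisibleSet (Δ : ℕ) (C : Finset (Submodule F M)) : Prop :=
  ∀ H : Submodule F M, IsHyperplane H → interCard C H ≡ C.card [MOD Δ]

noncomputable instance fintypeSubmodule [Finite M] : Fintype (Submodule F M) :=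
  have : Finite (Submodule F M) :=
    Finite.of_injective (fun S => (S : Set M)) SetLike.coe_injective
  Fintype.ofFinite _

end PGDefs


set_option linter.unusedSectionVars false
set_option linter.unnecessarySimpa false
set_option maxHeartbeats 1000000

namespace Cor410

open Finset Submodule Sum

variable (F : Type) [Field F] [Fintype F]

noncomputable local instance : DecidableEq F := Classical.decEq F

/-- basis index type -/
abbrev K := Fin 7 ⊕ Fˣ

lemma cardK : Fintype.card (K F) = Fintype.card F + 6 := by
  have h1 : 1 ≤ Fintype.card F := Fintype.card_pos
  rw [Fintype.card_sum, Fintype.card_fin, Fintype.card_units]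
  omega

noncomputable def ep : K F ≃ Fin (Fintype.card F + 6) :=
  Fintype.equivFinOfCardEq (cardK F)

noncomputable def eV (k : K F) : Fin (Fintype.card F + 6) → F := Pi.single (ep F k) 1

lemma eV_apply (k k' : K F) : eV F k (ep F k') = if k' = k then 1 else 0 := by
  rw [eV, Pi.single_apply]
  simp

noncomputable def vP : Fin (Fintype.card F + 6) → F := eV F (.inl 0)
noncomputable def vX1 : Fin (Fintype.card F + 6) → F := eV F (.inl 1)
noncomputable def vX2 : Fin (Fintype.card F + 6) → F := eV F (.inl 2)
noncomputable def vD2 : Fin (Fintype.card F + 6) → F := eV F (.inl 3)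
noncomputable def vD3 : Fin (Fintype.card F + 6) → F := eV F (.inl 4)
noncomputable def vW1 : Fin (Fintype.card F + 6) → F := eV F (.inl 5)
noncomputable def vW2 : Fin (Fintype.card F + 6) → F := eV F (.inl 6)
noncomputable def vB (t : Fˣ) : Fin (Fintype.card F + 6) → F := eV F (.inr t)

/-- index type for the points of the configuration -/
abbrev Om := (F × F) ⊕ ((Fˣ × F × F) ⊕ ((Fˣ × F × F) ⊕ ((F × F) ⊕ ((F × F) ⊕ ((F × F) ⊕ (Fˣ × F × F))))))

noncomputable def gv : Om F → (Fin (Fintype.card F + 6) → F)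
  | .inl z => z.1 • vW1 F + z.2 • vW2 F + vP F
  | .inr (.inl z) => z.2.1 • vW1 F + z.2.2 • vW2 F + vB F z.1
  | .inr (.inr (.inl z)) => z.2.1 • vP F + z.2.2 • vD2 F + (vX2 F + (z.1 : F) • vX1 F)
  | .inr (.inr (.inr (.inl z))) => z.1 • vP F + z.2 • vD2 F + (vW2 F + vX1 F)
  | .inr (.inr (.inr (.inr (.inl z)))) => z.1 • vP F + z.2 • vD3 F + vX1 F
  | .inr (.inr (.inr (.inr (.inr (.inl z))))) => z.1 • vP F + z.2 • vD3 F + vX2 F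
  | .inr (.inr (.inr (.inr (.inr (.inr z))))) => z.2.1 • vP F + z.2.2 • vD3 F + (vW1 F + (z.1 : F) • vX2 F)

def ok : Om F → Prop
  | .inl z => z ≠ (0, 0)
  | .inr (.inl _) => True
  | .inr (.inr (.inl z)) => z.2.2 ≠ 0
  | .inr (.inr (.inr (.inl _))) => True
  | .inr (.inr (.inr (.inr (.inl z)))) => z.2 ≠ 0
  | .inr (.inr (.inr (.inr (.inr (.inl z))))) => z.2 ≠ 0
  | .inr (.inr (.inr (.inr (.inr (.inr z))))) => z.1 ≠ 1

noncomputable def Iset : Finset (Om F) := univ.filter (ok F)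

noncomputable def Cset : Finset (Submodule F (Fin (Fintype.card F + 6) → F)) :=
  (Iset F).image (fun w => Submodule.span F {gv F w})


lemma coordEq {u : Fˣ} {f g : Fin (Fintype.card F + 6) → F} (hu : u • f = g) (k : K F) :
    (u : F) * f (ep F k) = g (ep F k) := by
  have := congrFun hu (ep F k)
  simpa [Units.smul_def] using this

lemma gv_ne_zero (w : Om F) : gv F w ≠ 0 := by
  intro h
  rcases w with z | z | z | z | z | z | z
  · have := congrFun h (ep F (.inl 0)); simp [gv, vP, vX1, vX2, vD2, vD3, vW1, vW2, vB, eV_apply, mul_eq_zero, Units.ne_zero] at this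
  · have := congrFun h (ep F (.inr z.1)); simp [gv, vP, vX1, vX2, vD2, vD3, vW1, vW2, vB, eV_apply, mul_eq_zero, Units.ne_zero] at this
  · have := congrFun h (ep F (.inl 2)); simp [gv, vP, vX1, vX2, vD2, vD3, vW1, vW2, vB, eV_apply, mul_eq_zero, Units.ne_zero] at this
  · have := congrFun h (ep F (.inl 6)); simp [gv, vP, vX1, vX2, vD2, vD3, vW1, vW2, vB, eV_apply, mul_eq_zero, Units.ne_zero] at this
  · have := congrFun h (ep F (.inl 1)); simp [gv, vP, vX1, vX2, vD2, vD3, vW1, vW2, vB, eV_apply, mul_eq_zero, Units.ne_zero] at this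
  · have := congrFun h (ep F (.inl 2)); simp [gv, vP, vX1, vX2, vD2, vD3, vW1, vW2, vB, eV_apply, mul_eq_zero, Units.ne_zero] at this
  · have := congrFun h (ep F (.inl 5)); simp [gv, vP, vX1, vX2, vD2, vD3, vW1, vW2, vB, eV_apply, mul_eq_zero, Units.ne_zero] at this

lemma gv_injOn : ∀ w1 ∈ Iset F, ∀ w2 ∈ Iset F,
    Submodule.span F {gv F w1} = Submodule.span F {gv F w2} → w1 = w2 := by
  intro w1 h1 w2 h2 hsp
  have hw1 := (Finset.mem_filter.mp h1).2
  have hw2 := (Finset.mem_filter.mp h2).2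
  obtain ⟨u, hu⟩ := Submodule.span_singleton_eq_span_singleton.mp hsp
  rcases w1 with z | z | z | z | z | z | z <;> rcases w2 with z' | z' | z' | z' | z' | z' | z' <;>
    simp only [ok, ne_eq] at hw1 hw2
  · -- (1,1)
    have h0 := coordEq F hu (.inl 0)
    have h5 := coordEq F hu (.inl 5)
    have h6 := coordEq F hu (.inl 6)
    simp [gv, vP, vX1, vX2, vD2, vD3, vW1, vW2, vB, eV_apply, mul_eq_zero, Units.ne_zero] at h0 h5 h6
    rw [h0] at h5 h6
    simp only [Units.val_one, one_mul] at h5 h6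
    simp only [Sum.inl.injEq, Sum.inr.injEq]
    exact Prod.ext h5 h6
  · -- (1,2)
    have h := coordEq F hu (.inr z'.1)
    simp [gv, vP, vX1, vX2, vD2, vD3, vW1, vW2, vB, eV_apply, mul_eq_zero, Units.ne_zero, hw1] at h
  · -- (1,3)
    have h := coordEq F hu (.inl 2)
    simp [gv, vP, vX1, vX2, vD2, vD3, vW1, vW2, vB, eV_apply, mul_eq_zero, Units.ne_zero, hw1, hw2] at h
  · -- (1,4)
    have h := coordEq F hu (.inl 1)
    simp [gv, vP, vX1, vX2, vD2, vD3, vW1, vW2, vB, eV_apply, mul_eq_zero, Units.ne_zero, hw1] at h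
  · -- (1,5)
    have h := coordEq F hu (.inl 1)
    simp [gv, vP, vX1, vX2, vD2, vD3, vW1, vW2, vB, eV_apply, mul_eq_zero, Units.ne_zero, hw1, hw2] at h
  · -- (1,6)
    have h := coordEq F hu (.inl 2)
    simp [gv, vP, vX1, vX2, vD2, vD3, vW1, vW2, vB, eV_apply, mul_eq_zero, Units.ne_zero, hw1, hw2] at h
  · -- (1,7)
    have h := coordEq F hu (.inl 2)
    simp [gv, vP, vX1, vX2, vD2, vD3, vW1, vW2, vB, eV_apply, mul_eq_zero, Units.ne_zero] at h
    exact (Units.ne_zero _ h.symm).elim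
  · -- (2,1)
    have h := coordEq F hu (.inr z.1)
    simp [gv, vP, vX1, vX2, vD2, vD3, vW1, vW2, vB, eV_apply, mul_eq_zero, Units.ne_zero, hw2] at h
  · -- (2,2)
    by_cases hb : z.1 = z'.1
    · have h0 := coordEq F hu (.inr z.1)
      have h5 := coordEq F hu (.inl 5)
      have h6 := coordEq F hu (.inl 6)
      simp [gv, vP, vX1, vX2, vD2, vD3, vW1, vW2, vB, eV_apply, mul_eq_zero, Units.ne_zero, hb] at h0 h5 h6
      rw [h0] at h5 h6
      simp only [Units.val_one, one_mul] at h5 h6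
      simp only [Sum.inl.injEq, Sum.inr.injEq]
      exact Prod.ext hb (Prod.ext h5 h6)
    · have h := coordEq F hu (.inr z.1)
      simp [gv, vP, vX1, vX2, vD2, vD3, vW1, vW2, vB, eV_apply, mul_eq_zero, Units.ne_zero, hb] at h
  · -- (2,3)
    have h := coordEq F hu (.inr z.1)
    simp [gv, vP, vX1, vX2, vD2, vD3, vW1, vW2, vB, eV_apply, mul_eq_zero, Units.ne_zero, hw2] at h
  · -- (2,4)
    have h := coordEq F hu (.inr z.1)
    simp [gv, vP, vX1, vX2, vD2, vD3, vW1, vW2, vB, eV_apply, mul_eq_zero, Units.ne_zero] at h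
  · -- (2,5)
    have h := coordEq F hu (.inr z.1)
    simp [gv, vP, vX1, vX2, vD2, vD3, vW1, vW2, vB, eV_apply, mul_eq_zero, Units.ne_zero, hw2] at h
  · -- (2,6)
    have h := coordEq F hu (.inr z.1)
    simp [gv, vP, vX1, vX2, vD2, vD3, vW1, vW2, vB, eV_apply, mul_eq_zero, Units.ne_zero, hw2] at h
  · -- (2,7)
    have h := coordEq F hu (.inr z.1)
    simp [gv, vP, vX1, vX2, vD2, vD3, vW1, vW2, vB, eV_apply, mul_eq_zero, Units.ne_zero, hw2] at h
  · -- (3,1)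
    have h := coordEq F hu (.inl 2)
    simp [gv, vP, vX1, vX2, vD2, vD3, vW1, vW2, vB, eV_apply, mul_eq_zero, Units.ne_zero, hw1, hw2] at h
  · -- (3,2)
    have h := coordEq F hu (.inr z'.1)
    simp [gv, vP, vX1, vX2, vD2, vD3, vW1, vW2, vB, eV_apply, mul_eq_zero, Units.ne_zero, hw1] at h
  · -- (3,3)
    have hp := coordEq F hu (.inl 2)
    have h1 := coordEq F hu (.inl 1)
    have h0 := coordEq F hu (.inl 0)
    have h3 := coordEq F hu (.inl 3)
    simp [gv, vP, vX1, vX2, vD2, vD3, vW1, vW2, vB, eV_apply, mul_eq_zero, Units.ne_zero] at hp h1 h0 h3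
    rw [hp] at h1 h0 h3
    simp only [Units.val_one, one_mul] at h1 h0 h3
    simp only [Sum.inl.injEq, Sum.inr.injEq]
    exact Prod.ext (Units.ext h1) (Prod.ext h0 h3)
  · -- (3,4)
    have h := coordEq F hu (.inl 2)
    simp [gv, vP, vX1, vX2, vD2, vD3, vW1, vW2, vB, eV_apply, mul_eq_zero, Units.ne_zero, hw1] at h
  · -- (3,5)
    have h := coordEq F hu (.inl 2)
    simp [gv, vP, vX1, vX2, vD2, vD3, vW1, vW2, vB, eV_apply, mul_eq_zero, Units.ne_zero, hw1, hw2] at h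
  · -- (3,6)
    have h := coordEq F hu (.inl 3)
    simp [gv, vP, vX1, vX2, vD2, vD3, vW1, vW2, vB, eV_apply, mul_eq_zero, Units.ne_zero, hw1, hw2] at h
  · -- (3,7)
    have h := coordEq F hu (.inl 3)
    simp [gv, vP, vX1, vX2, vD2, vD3, vW1, vW2, vB, eV_apply, mul_eq_zero, Units.ne_zero, hw1, hw2] at h
  · -- (4,1)
    have h := coordEq F hu (.inl 1)
    simp [gv, vP, vX1, vX2, vD2, vD3, vW1, vW2, vB, eV_apply, mul_eq_zero, Units.ne_zero, hw2] at h
  · -- (4,2)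
    have h := coordEq F hu (.inr z'.1)
    simp [gv, vP, vX1, vX2, vD2, vD3, vW1, vW2, vB, eV_apply, mul_eq_zero, Units.ne_zero] at h
  · -- (4,3)
    have h := coordEq F hu (.inl 6)
    simp [gv, vP, vX1, vX2, vD2, vD3, vW1, vW2, vB, eV_apply, mul_eq_zero, Units.ne_zero, hw2] at h
  · -- (4,4)
    have hp := coordEq F hu (.inl 6)
    have h0 := coordEq F hu (.inl 0)
    have h3 := coordEq F hu (.inl 3)
    simp [gv, vP, vX1, vX2, vD2, vD3, vW1, vW2, vB, eV_apply, mul_eq_zero, Units.ne_zero] at hp h0 h3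
    rw [hp] at h0 h3
    simp only [Units.val_one, one_mul] at h0 h3
    simp only [Sum.inl.injEq, Sum.inr.injEq]
    exact Prod.ext h0 h3
  · -- (4,5)
    have h := coordEq F hu (.inl 6)
    simp [gv, vP, vX1, vX2, vD2, vD3, vW1, vW2, vB, eV_apply, mul_eq_zero, Units.ne_zero, hw2] at h
  · -- (4,6)
    have h := coordEq F hu (.inl 1)
    simp [gv, vP, vX1, vX2, vD2, vD3, vW1, vW2, vB, eV_apply, mul_eq_zero, Units.ne_zero, hw2] at h
  · -- (4,7)
    have h := coordEq F hu (.inl 6)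
    simp [gv, vP, vX1, vX2, vD2, vD3, vW1, vW2, vB, eV_apply, mul_eq_zero, Units.ne_zero, hw2] at h
  · -- (5,1)
    have h := coordEq F hu (.inl 1)
    simp [gv, vP, vX1, vX2, vD2, vD3, vW1, vW2, vB, eV_apply, mul_eq_zero, Units.ne_zero, hw1, hw2] at h
  · -- (5,2)
    have h := coordEq F hu (.inr z'.1)
    simp [gv, vP, vX1, vX2, vD2, vD3, vW1, vW2, vB, eV_apply, mul_eq_zero, Units.ne_zero, hw1] at h
  · -- (5,3)
    have h := coordEq F hu (.inl 4)
    simp [gv, vP, vX1, vX2, vD2, vD3, vW1, vW2, vB, eV_apply, mul_eq_zero, Units.ne_zero, hw1, hw2] at h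
  · -- (5,4)
    have h := coordEq F hu (.inl 4)
    simp [gv, vP, vX1, vX2, vD2, vD3, vW1, vW2, vB, eV_apply, mul_eq_zero, Units.ne_zero, hw1] at h
  · -- (5,5)
    have hp := coordEq F hu (.inl 1)
    have h0 := coordEq F hu (.inl 0)
    have h4 := coordEq F hu (.inl 4)
    simp [gv, vP, vX1, vX2, vD2, vD3, vW1, vW2, vB, eV_apply, mul_eq_zero, Units.ne_zero] at hp h0 h4
    rw [hp] at h0 h4
    simp only [Units.val_one, one_mul] at h0 h4
    simp only [Sum.inl.injEq, Sum.inr.injEq]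
    exact Prod.ext h0 h4
  · -- (5,6)
    have h := coordEq F hu (.inl 1)
    simp [gv, vP, vX1, vX2, vD2, vD3, vW1, vW2, vB, eV_apply, mul_eq_zero, Units.ne_zero, hw1, hw2] at h
  · -- (5,7)
    have h := coordEq F hu (.inl 5)
    simp [gv, vP, vX1, vX2, vD2, vD3, vW1, vW2, vB, eV_apply, mul_eq_zero, Units.ne_zero, hw1, hw2] at h
  · -- (6,1)
    have h := coordEq F hu (.inl 2)
    simp [gv, vP, vX1, vX2, vD2, vD3, vW1, vW2, vB, eV_apply, mul_eq_zero, Units.ne_zero, hw1, hw2] at h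
  · -- (6,2)
    have h := coordEq F hu (.inr z'.1)
    simp [gv, vP, vX1, vX2, vD2, vD3, vW1, vW2, vB, eV_apply, mul_eq_zero, Units.ne_zero, hw1] at h
  · -- (6,3)
    have h := coordEq F hu (.inl 4)
    simp [gv, vP, vX1, vX2, vD2, vD3, vW1, vW2, vB, eV_apply, mul_eq_zero, Units.ne_zero, hw1, hw2] at h
  · -- (6,4)
    have h := coordEq F hu (.inl 2)
    simp [gv, vP, vX1, vX2, vD2, vD3, vW1, vW2, vB, eV_apply, mul_eq_zero, Units.ne_zero, hw1] at h
  · -- (6,5)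
    have h := coordEq F hu (.inl 2)
    simp [gv, vP, vX1, vX2, vD2, vD3, vW1, vW2, vB, eV_apply, mul_eq_zero, Units.ne_zero, hw1, hw2] at h
  · -- (6,6)
    have hp := coordEq F hu (.inl 2)
    have h0 := coordEq F hu (.inl 0)
    have h4 := coordEq F hu (.inl 4)
    simp [gv, vP, vX1, vX2, vD2, vD3, vW1, vW2, vB, eV_apply, mul_eq_zero, Units.ne_zero] at hp h0 h4
    rw [hp] at h0 h4
    simp only [Units.val_one, one_mul] at h0 h4
    simp only [Sum.inl.injEq, Sum.inr.injEq]
    exact Prod.ext h0 h4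
  · -- (6,7)
    have h := coordEq F hu (.inl 5)
    simp [gv, vP, vX1, vX2, vD2, vD3, vW1, vW2, vB, eV_apply, mul_eq_zero, Units.ne_zero, hw1, hw2] at h
  · -- (7,1)
    have h := coordEq F hu (.inl 2)
    simp [gv, vP, vX1, vX2, vD2, vD3, vW1, vW2, vB, eV_apply, mul_eq_zero, Units.ne_zero, hw1, hw2] at h
  · -- (7,2)
    have h := coordEq F hu (.inr z'.1)
    simp [gv, vP, vX1, vX2, vD2, vD3, vW1, vW2, vB, eV_apply, mul_eq_zero, Units.ne_zero, hw1] at h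
  · -- (7,3)
    have h := coordEq F hu (.inl 5)
    simp [gv, vP, vX1, vX2, vD2, vD3, vW1, vW2, vB, eV_apply, mul_eq_zero, Units.ne_zero, hw1, hw2] at h
  · -- (7,4)
    have h := coordEq F hu (.inl 5)
    simp [gv, vP, vX1, vX2, vD2, vD3, vW1, vW2, vB, eV_apply, mul_eq_zero, Units.ne_zero, hw1] at h
  · -- (7,5)
    have h := coordEq F hu (.inl 5)
    simp [gv, vP, vX1, vX2, vD2, vD3, vW1, vW2, vB, eV_apply, mul_eq_zero, Units.ne_zero, hw1, hw2] at h
  · -- (7,6)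
    have h := coordEq F hu (.inl 5)
    simp [gv, vP, vX1, vX2, vD2, vD3, vW1, vW2, vB, eV_apply, mul_eq_zero, Units.ne_zero, hw1, hw2] at h
  · -- (7,7)
    have hp := coordEq F hu (.inl 5)
    have h2 := coordEq F hu (.inl 2)
    have h0 := coordEq F hu (.inl 0)
    have h4 := coordEq F hu (.inl 4)
    simp [gv, vP, vX1, vX2, vD2, vD3, vW1, vW2, vB, eV_apply, mul_eq_zero, Units.ne_zero] at hp h2 h0 h4
    rw [hp] at h2 h0 h4
    simp only [Units.val_one, one_mul] at h2 h0 h4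
    simp only [Sum.inl.injEq, Sum.inr.injEq]
    exact Prod.ext (Units.ext h2) (Prod.ext h0 h4)


end Cor410

section Counting

open Finset

/-- instance-stable filtered cardinality of a predicate over a fintype -/
noncomputable def fc {α : Type} [Fintype α] (p : α → Prop) : ℕ :=
  (@Finset.filter α p (fun a => Classical.propDecidable (p a)) Finset.univ).card

lemma fc_eq_card {α : Type} [Fintype α] (p : α → Prop) [DecidablePred p] :
    ((univ : Finset α).filter p).card = fc p := by
  unfold fc
  congr 1
  ext a
  simp [Finset.mem_filter]

lemma fc_congr {α : Type} [Fintype α] {p q : α → Prop} (h : ∀ a, p a ↔ q a) : fc p = fc q := by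
  unfold fc
  congr 1
  ext a
  simp [Finset.mem_filter, h a]

lemma fc_sum {α β : Type} [Fintype α] [Fintype β] (p : α ⊕ β → Prop) :
    fc p = fc (fun a => p (.inl a)) + fc (fun b => p (.inr b)) := by
  unfold fc
  have h1 : (@Finset.filter (α ⊕ β) p (fun a => Classical.propDecidable (p a)) univ).toLeft
      = @Finset.filter α (fun a => p (.inl a)) (fun a => Classical.propDecidable _) univ := by
    ext a; simp [Finset.mem_filter]
  have h2 : (@Finset.filter (α ⊕ β) p (fun a => Classical.propDecidable (p a)) univ).toRight
      = @Finset.filter β (fun b => p (.inr b)) (fun a => Classical.propDecidable _) univ := by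
    ext b; simp [Finset.mem_filter]
  rw [← Finset.card_toLeft_add_card_toRight, h1, h2]

lemma fc_prod {σ τ : Type} [Fintype σ] [Fintype τ] (p : τ → σ → Prop) :
    fc (fun z : τ × σ => p z.1 z.2) = ∑ t : τ, fc (p t) := by
  unfold fc
  rw [Finset.card_eq_sum_card_fiberwise (f := fun z => z.1) (t := univ) (fun x _ => mem_univ _)]
  refine Finset.sum_congr rfl fun t _ => ?_
  refine Finset.card_bij' (fun z _ => z.2) (fun y _ => (t, y)) ?_ ?_ ?_ ?_
  · intro z hz
    simp only [Finset.mem_filter, Finset.mem_univ, true_and] at hz ⊢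
    obtain ⟨h1, h2⟩ := hz
    rwa [h2] at h1
  · intro y hy
    simp only [Finset.mem_filter, Finset.mem_univ, true_and] at hy ⊢
    exact ⟨hy, by simp⟩
  · intro z hz
    simp only [Finset.mem_filter, Finset.mem_univ, true_and] at hz
    exact Prod.ext hz.2.symm rfl
  · intro y _; rfl

lemma fc_split {α : Type} [Fintype α] (p q : α → Prop) :
    fc (fun a => p a ∧ q a) + fc (fun a => ¬ p a ∧ q a) = fc q := by
  classical
  rw [← fc_eq_card q, ← Finset.card_filter_add_card_filter_not
    (s := (univ : Finset α).filter q) (p := p)]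
  congr 1
  · rw [Finset.filter_filter, fc_eq_card]
    exact fc_congr (fun a => and_comm)
  · rw [Finset.filter_filter, fc_eq_card]
    exact fc_congr (fun a => and_comm)


lemma fc_true {α : Type} [Fintype α] : fc (fun _ : α => True) = Fintype.card α := by
  rw [← fc_eq_card]
  simp [Finset.card_univ]

lemma fc_const {α : Type} [Fintype α] (P : Prop) :
    fc (fun _ : α => P) = if P then Fintype.card α else 0 := by
  classical
  rw [← fc_eq_card, Finset.filter_const]
  split <;> simp [Finset.card_univ]

lemma fc_false {α : Type} [Fintype α] : fc (fun _ : α => False) = 0 := by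
  rw [fc_const]
  simp

lemma arith_sq {n : ℕ} (h : 2 ≤ n) : n + (n - 1) * n = n ^ 2 := by
  obtain ⟨b, rfl⟩ : ∃ b, n = b + 2 := ⟨n - 2, by omega⟩
  have hb : b + 2 - 1 = b + 1 := by omega
  rw [hb]; ring

lemma arith_sp {n : ℕ} (h : 2 ≤ n) : 1 + ((n - 1) * n + n + n) = n ^ 2 + (n + 1) := by
  obtain ⟨b, rfl⟩ : ∃ b, n = b + 2 := ⟨n - 2, by omega⟩
  have hb : b + 2 - 1 = b + 1 := by omega
  rw [hb]; ring

lemma arith_sq2 {n : ℕ} (h : 2 ≤ n) : n + n + (n - 1 - 1) * n = n ^ 2 := by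
  obtain ⟨b, rfl⟩ : ∃ b, n = b + 2 := ⟨n - 2, by omega⟩
  have hb : b + 2 - 1 - 1 = b := by omega
  rw [hb]; ring

end Counting

namespace Cor410
open Finset Submodule Sum
variable (F : Type) [Field F] [Fintype F]
noncomputable local instance : DecidableEq F := Classical.decEq F

/-- number of solutions of `a*A + c = 0` -/
noncomputable def n1v (A c : F) : ℕ := if A = 0 then (if c = 0 then Fintype.card F else 0) else 1

/-- number of solutions of `z.1*A + z.2*B + c = 0` -/
noncomputable def n2v (A B c : F) : ℕ :=
  if A = 0 ∧ B = 0 then (if c = 0 then Fintype.card F ^ 2 else 0) else Fintype.card F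

lemma cnt1 (A c : F) : fc (fun a : F => a * A + c = 0) = n1v F A c := by
  rw [← fc_eq_card]
  rcases eq_or_ne A 0 with rfl | hA
  · simp only [n1v, if_pos rfl, mul_zero, zero_add, Finset.filter_const]
    split <;> simp [Finset.card_univ]
  · rw [n1v, if_neg hA, Finset.card_eq_one]
    refine ⟨-c / A, ?_⟩
    ext a
    simp only [Finset.mem_filter, Finset.mem_univ, true_and, Finset.mem_singleton]
    constructor
    · intro h; field_simp; linear_combination h
    · rintro rfl; field_simp; ring

lemma cntAux {A : F} (hA : A ≠ 0) (L : F → F) :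
    fc (fun z : F × F => z.1 * A + L z.2 = 0) = Fintype.card F := by
  rw [← fc_eq_card, ← Finset.card_univ (α := F)]
  apply Finset.card_bij' (i := fun z _ => z.2) (j := fun b _ => (-(L b) / A, b))
  · intro a _; exact mem_univ _
  · intro b _
    simp only [Finset.mem_filter, Finset.mem_univ, true_and]
    field_simp; ring
  · intro a ha
    simp only [Finset.mem_filter, Finset.mem_univ, true_and] at ha
    ext
    · field_simp; linear_combination -ha
    · rfl
  · intro b _; rfl

lemma cntAux2 {B : F} (hB : B ≠ 0) (L : F → F) :
    fc (fun z : F × F => z.2 * B + L z.1 = 0) = Fintype.card F := by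
  rw [← fc_eq_card, ← Finset.card_univ (α := F)]
  apply Finset.card_bij' (i := fun z _ => z.1) (j := fun a _ => (a, -(L a) / B))
  · intro a _; exact mem_univ _
  · intro b _
    simp only [Finset.mem_filter, Finset.mem_univ, true_and]
    field_simp; ring
  · intro a ha
    simp only [Finset.mem_filter, Finset.mem_univ, true_and] at ha
    ext
    · rfl
    · field_simp; linear_combination -ha
  · intro b _; rfl

lemma cnt2 (A B c : F) :
    fc (fun z : F × F => z.1 * A + z.2 * B + c = 0) = n2v F A B c := by
  rcases eq_or_ne A 0 with rfl | hA
  · rcases eq_or_ne B 0 with rfl | hB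
    · rw [← fc_eq_card]
      simp only [n2v, mul_zero, zero_add, and_self, if_pos rfl, Finset.filter_const]
      split <;> simp [Finset.card_univ, Fintype.card_prod, sq]
    · rw [n2v, if_neg (by simp [hB])]
      have he : fc (fun z : F × F => z.1 * 0 + z.2 * B + c = 0)
          = fc (fun z : F × F => z.2 * B + (z.1 * 0 + c) = 0) := by
        apply fc_congr
        intro z
        constructor <;> intro h <;> linear_combination h
      rw [he]
      exact cntAux2 F hB (fun a => a * 0 + c)
  · rw [n2v, if_neg (by simp [hA])]
    have he : fc (fun z : F × F => z.1 * A + z.2 * B + c = 0)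
        = fc (fun z : F × F => z.1 * A + (z.2 * B + c) = 0) := by
      apply fc_congr
      intro z
      constructor <;> intro h <;> linear_combination h
    rw [he]
    exact cntAux F hA (fun b => b * B + c)

lemma cntZeroSnd (A B c : F) :
    fc (fun z : F × F => ¬ z.2 ≠ 0 ∧ z.1 * A + z.2 * B + c = 0) = n1v F A c := by
  rw [← cnt1 F A c, ← fc_eq_card, ← fc_eq_card]
  refine Finset.card_bij' (fun z _ => z.1) (fun a _ => (a, 0)) ?_ ?_ ?_ ?_
  · intro z hz
    simp only [Finset.mem_filter, Finset.mem_univ, true_and, not_not] at hz ⊢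
    obtain ⟨h1, h2⟩ := hz
    rw [h1] at h2
    linear_combination h2
  · intro a ha
    simp only [Finset.mem_filter, Finset.mem_univ, true_and, not_not] at ha
    simp only [Finset.mem_filter, Finset.mem_univ, true_and]
    refine ⟨by simp, ?_⟩
    show a * A + (0 : F) * B + c = 0
    linear_combination ha
  · intro z hz
    simp only [Finset.mem_filter, Finset.mem_univ, true_and, not_not] at hz
    exact Prod.ext rfl hz.1.symm
  · intro a _; rfl

lemma cnt2' (A B c : F) :
    fc (fun z : F × F => z.2 ≠ 0 ∧ z.1 * A + z.2 * B + c = 0) + n1v F A c = n2v F A B c := by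
  rw [← cnt2 F A B c, ← cntZeroSnd F A B c]
  exact fc_split (fun z : F × F => z.2 ≠ 0) (fun z => z.1 * A + z.2 * B + c = 0)

lemma cntZeroPair (A B c : F) :
    fc (fun z : F × F => ¬ z ≠ (0, 0) ∧ z.1 * A + z.2 * B + c = 0)
      = if c = 0 then 1 else 0 := by
  rw [← fc_eq_card]
  rcases eq_or_ne c 0 with rfl | hc
  · rw [if_pos rfl, Finset.card_eq_one]
    refine ⟨(0, 0), ?_⟩
    ext z
    simp only [Finset.mem_filter, Finset.mem_univ, true_and, not_not, Finset.mem_singleton]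
    constructor
    · rintro ⟨h, _⟩; exact h
    · rintro rfl; simp
  · rw [if_neg hc, Finset.card_eq_zero, Finset.filter_eq_empty_iff]
    rintro z hz
    rintro ⟨h1, h2⟩
    rw [not_not] at h1
    rw [h1] at h2
    simp at h2
    exact hc (by linear_combination h2)

lemma cnt2'' (A B c : F) :
    fc (fun z : F × F => z ≠ (0, 0) ∧ z.1 * A + z.2 * B + c = 0) + (if c = 0 then 1 else 0)
      = n2v F A B c := by
  rw [← cnt2 F A B c, ← cntZeroPair F A B c]
  exact fc_split (fun z : F × F => z ≠ (0, 0)) (fun z => z.1 * A + z.2 * B + c = 0)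

lemma card_ne_pair : fc (fun z : F × F => z ≠ (0, 0)) = Fintype.card F ^ 2 - 1 := by
  rw [← fc_eq_card, Finset.filter_ne' univ ((0, 0) : F × F),
    Finset.card_erase_of_mem (mem_univ _), Finset.card_univ, Fintype.card_prod, sq]

lemma card_snd_ne : fc (fun z : F × F => z.2 ≠ 0) = Fintype.card F * (Fintype.card F - 1) := by
  rw [← fc_eq_card]
  have h : ((univ : Finset (F × F)).filter fun z => z.2 ≠ 0)
      = univ ×ˢ (univ.filter fun b : F => b ≠ 0) := by
    ext z
    simp [Finset.mem_product]
  rw [h, Finset.card_product, Finset.card_univ, Finset.filter_ne' univ (0 : F),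
    Finset.card_erase_of_mem (mem_univ _), Finset.card_univ]

lemma zcount1 (X2 : F) : fc (fun t : Fˣ => X2 + (t : F) * 0 = 0)
    = if X2 = 0 then Fintype.card F - 1 else 0 := by
  rw [← fc_eq_card]
  simp only [mul_zero, add_zero, Finset.filter_const]
  split
  · rw [Finset.card_univ, Fintype.card_units]
  · exact Finset.card_empty

lemma zcount2 {X1 : F} (hX1 : X1 ≠ 0) (X2 : F) :
    fc (fun t : Fˣ => X2 + (t : F) * X1 = 0) = if X2 = 0 then 0 else 1 := by
  rw [← fc_eq_card]
  split
  · next h =>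
    subst h
    rw [Finset.card_eq_zero, Finset.filter_eq_empty_iff]
    intro t _
    simp only [zero_add]
    exact mul_ne_zero (Units.ne_zero t) hX1
  · next h =>
    rw [Finset.card_eq_one]
    refine ⟨Units.mk0 (-X2 / X1) (by simp [h, hX1]), ?_⟩
    ext t
    simp only [Finset.mem_filter, Finset.mem_univ, true_and, Finset.mem_singleton]
    rw [Units.ext_iff]
    simp only [Units.val_mk0]
    constructor
    · intro ht
      field_simp
      linear_combination ht
    · intro ht
      rw [ht]
      field_simp; ring

-- ## cardinality of the index set

lemma erase_card_units : fc (fun t : Fˣ => ¬ t = 1) = Fintype.card F - 1 - 1 := by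
  rw [← fc_eq_card]
  have h : ((univ : Finset Fˣ).filter fun t : Fˣ => ¬ t = 1) = univ.erase 1 := by
    ext t
    simp [Finset.mem_erase]
  rw [h, Finset.card_erase_of_mem (mem_univ _), Finset.card_univ, Fintype.card_units]

lemma Iset_card_fc : (Iset F).card = fc (ok F) := by
  rw [Iset]
  exact fc_eq_card _

lemma card_Iset : (Iset F).card + (Fintype.card F ^ 2 + Fintype.card F + 1)
    = 3 * Fintype.card F ^ 3 := by
  have hq2 : 2 ≤ Fintype.card F := Fintype.one_lt_card
  have h0 : (Iset F).card =
      fc (fun z : F × F => ok F (.inl z))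
      + (fc (fun z : Fˣ × F × F => ok F (.inr (.inl z)))
      + (fc (fun z : Fˣ × F × F => ok F (.inr (.inr (.inl z))))
      + (fc (fun z : F × F => ok F (.inr (.inr (.inr (.inl z)))))
      + (fc (fun z : F × F => ok F (.inr (.inr (.inr (.inr (.inl z))))))
      + (fc (fun z : F × F => ok F (.inr (.inr (.inr (.inr (.inr (.inl z)))))))
      + fc (fun z : Fˣ × F × F => ok F (.inr (.inr (.inr (.inr (.inr (.inr z)))))))))))) := by
    rw [Iset_card_fc, fc_sum, fc_sum, fc_sum, fc_sum, fc_sum, fc_sum]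
  set q := Fintype.card F with hqdef
  have e1 : fc (fun z : F × F => ok F (.inl z)) = q ^ 2 - 1 :=
    (fc_congr (fun z => by simp [ok])).trans (card_ne_pair F)
  have e2 : fc (fun z : Fˣ × F × F => ok F (.inr (.inl z))) = (q - 1) * (q * q) := by
    refine (fc_congr (fun z => by simp [ok])).trans (fc_true.trans ?_)
    rw [Fintype.card_prod, Fintype.card_prod, Fintype.card_units]
  have e3 : fc (fun z : Fˣ × F × F => ok F (.inr (.inr (.inl z)))) = (q - 1) * (q * (q - 1)) := by
    refine (fc_congr (fun z => by simp [ok])).trans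
      (Eq.trans (fc_prod (fun (_ : Fˣ) (y : F × F) => y.2 ≠ 0)) ?_)
    rw [Finset.sum_congr rfl (fun t _ => card_snd_ne F), Finset.sum_const, Finset.card_univ,
      Fintype.card_units, smul_eq_mul]
  have e4 : fc (fun z : F × F => ok F (.inr (.inr (.inr (.inl z))))) = q * q := by
    refine (fc_congr (fun z => by simp [ok])).trans (fc_true.trans ?_)
    rw [Fintype.card_prod]
  have e5 : fc (fun z : F × F => ok F (.inr (.inr (.inr (.inr (.inl z)))))) = q * (q - 1) :=
    (fc_congr (fun z => by simp [ok])).trans (card_snd_ne F)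
  have e6 : fc (fun z : F × F => ok F (.inr (.inr (.inr (.inr (.inr (.inl z))))))) = q * (q - 1) :=
    (fc_congr (fun z => by simp [ok])).trans (card_snd_ne F)
  have e7 : fc (fun z : Fˣ × F × F => ok F (.inr (.inr (.inr (.inr (.inr (.inr z)))))))
      = (q - 1 - 1) * (q * q) := by
    refine (fc_congr (fun z => by simp [ok])).trans
      (Eq.trans (fc_prod (fun (t : Fˣ) (_ : F × F) => ¬ t = 1)) ?_)
    have hper : ∀ t : Fˣ, fc (fun _ : F × F => ¬ t = 1) = if ¬ t = 1 then q * q else 0 := by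
      intro t
      rw [fc_const, Fintype.card_prod, ← hqdef]
      by_cases h : t = 1 <;> simp [h]
    rw [Finset.sum_congr rfl (fun t _ => hper t), Finset.sum_ite, Finset.sum_const,
      Finset.sum_const, smul_eq_mul, smul_eq_mul, mul_zero, add_zero]
    congr 1
    rw [fc_eq_card]
    exact erase_card_units F
  rw [h0, e1, e2, e3, e4, e5, e6, e7]
  have hle1 : 1 ≤ q ^ 2 := Nat.one_le_pow _ _ (by omega)
  zify [hq2, hle1, show 1 ≤ q by omega, show 1 ≤ q - 1 by omega]
  ring

-- ## congruence lemmas for the groups of blocks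

lemma sumGA (A B : F) (c0 : F) (c : Fˣ → F) :
    (n2v F A B c0 + ∑ t : Fˣ, n2v F A B (c t)) ≡ 0 [MOD (Fintype.card F) ^ 2] := by
  have hq2 : 2 ≤ Fintype.card F := Fintype.one_lt_card
  by_cases h : A = 0 ∧ B = 0
  · apply Nat.modEq_zero_iff_dvd.mpr
    apply dvd_add
    · simp only [n2v, if_pos h]
      split <;> simp
    · apply Finset.dvd_sum
      intro t _
      simp only [n2v, if_pos h]
      split <;> simp
  · have hval : ∀ c' : F, n2v F A B c' = Fintype.card F := by
      intro c'
      simp only [n2v, if_neg h]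
    rw [hval, Finset.sum_congr rfl (fun t _ => hval (c t)), Finset.sum_const,
      Finset.card_univ, Fintype.card_units, smul_eq_mul, arith_sq hq2]
    exact Nat.modEq_zero_iff_dvd.mpr dvd_rfl

lemma sumGC (A B : F) (c1 c2 : F) (c : Fˣ → F) :
    (n2v F A B c1 + n2v F A B c2 + ∑ t : Fˣ, (if t = 1 then 0 else n2v F A B (c t)))
      ≡ 0 [MOD (Fintype.card F) ^ 2] := by
  have hq2 : 2 ≤ Fintype.card F := Fintype.one_lt_card
  by_cases h : A = 0 ∧ B = 0
  · apply Nat.modEq_zero_iff_dvd.mpr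
    apply dvd_add
    apply dvd_add
    · simp only [n2v, if_pos h]; split <;> simp
    · simp only [n2v, if_pos h]; split <;> simp
    · apply Finset.dvd_sum
      intro t _
      split
      · simp
      · simp only [n2v, if_pos h]; split <;> simp
  · have hval : ∀ c' : F, n2v F A B c' = Fintype.card F := by
      intro c'
      simp only [n2v, if_neg h]
    have hsum : ∑ t : Fˣ, (if t = 1 then 0 else n2v F A B (c t))
        = (Fintype.card F - 1 - 1) * Fintype.card F := by
      rw [Finset.sum_congr rfl (fun t _ => by rw [hval (c t)]), Finset.sum_ite,
        Finset.sum_const, Finset.sum_const, smul_eq_mul, mul_zero, zero_add, smul_eq_mul]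
      congr 1
      rw [fc_eq_card]
      exact erase_card_units F
    rw [hval, hval, hsum, arith_sq2 hq2]
    exact Nat.modEq_zero_iff_dvd.mpr dvd_rfl

-- ## the pencil lemma

lemma sumSP (P X1 X2 : F) :
    ((if P = 0 then 1 else 0) +
      ((∑ t : Fˣ, n1v F P (X2 + (t : F) * X1)) + n1v F P X1 + n1v F P X2))
      ≡ Fintype.card F + 1 [MOD (Fintype.card F) ^ 2] := by
  have hq2 : 2 ≤ Fintype.card F := Fintype.one_lt_card
  by_cases hP : P = 0
  · simp only [n1v, if_pos hP]
    have hsum2 : (∑ t : Fˣ, if X2 + (t : F) * X1 = 0 then Fintype.card F else 0)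
        = fc (fun t : Fˣ => X2 + (t : F) * X1 = 0) * Fintype.card F := by
      rw [Finset.sum_ite, Finset.sum_const, Finset.sum_const, smul_eq_mul, smul_eq_mul,
        mul_zero, add_zero, fc_eq_card]
    rw [hsum2]
    by_cases h1 : X1 = 0
    · rw [if_pos h1, h1, zcount1 F X2]
      by_cases h2 : X2 = 0
      · rw [if_pos h2, if_pos h2, arith_sp hq2]
        simpa using (Nat.ModEq.add_right (Fintype.card F + 1)
          (Nat.modEq_zero_iff_dvd.mpr (dvd_refl (Fintype.card F ^ 2))))
      · rw [if_neg h2, if_neg h2]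
        have h : 1 + (0 * Fintype.card F + Fintype.card F + 0) = Fintype.card F + 1 := by ring
        rw [h]
    · rw [if_neg h1, zcount2 F h1 X2]
      by_cases h2 : X2 = 0
      · rw [if_pos h2, if_pos h2]
        have h : 1 + (0 * Fintype.card F + 0 + Fintype.card F) = Fintype.card F + 1 := by ring
        rw [h]
      · rw [if_neg h2, if_neg h2]
        have h : 1 + (1 * Fintype.card F + 0 + 0) = Fintype.card F + 1 := by ring
        rw [h]
  · simp only [n1v, if_neg hP]
    rw [Finset.sum_const, Finset.card_univ, Fintype.card_units, smul_eq_mul, mul_one]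
    have h : ((0 : ℕ) + (Fintype.card F - 1 + 1 + 1)) = Fintype.card F + 1 := by omega
    rw [h]

-- ## the key counting congruence

lemma keyCount (φ : (Fin (Fintype.card F + 6) → F) →ₗ[F] F) :
    fc (fun w : Om F => ok F w ∧ φ (gv F w) = 0)
      ≡ (Iset F).card [MOD (Fintype.card F) ^ 2] := by
  have hq2 : 2 ≤ Fintype.card F := Fintype.one_lt_card
  have h0 : fc (fun w : Om F => ok F w ∧ φ (gv F w) = 0) =
      fc (fun z : F × F => ok F (.inl z) ∧ φ (gv F (.inl z)) = 0)
      + (fc (fun z : Fˣ × F × F => ok F (.inr (.inl z)) ∧ φ (gv F (.inr (.inl z))) = 0)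
      + (fc (fun z : Fˣ × F × F => ok F (.inr (.inr (.inl z))) ∧ φ (gv F (.inr (.inr (.inl z)))) = 0)
      + (fc (fun z : F × F => ok F (.inr (.inr (.inr (.inl z)))) ∧ φ (gv F (.inr (.inr (.inr (.inl z))))) = 0)
      + (fc (fun z : F × F => ok F (.inr (.inr (.inr (.inr (.inl z))))) ∧ φ (gv F (.inr (.inr (.inr (.inr (.inl z)))))) = 0)
      + (fc (fun z : F × F => ok F (.inr (.inr (.inr (.inr (.inr (.inl z)))))) ∧ φ (gv F (.inr (.inr (.inr (.inr (.inr (.inl z))))))) = 0)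
      + fc (fun z : Fˣ × F × F => ok F (.inr (.inr (.inr (.inr (.inr (.inr z)))))) ∧ φ (gv F (.inr (.inr (.inr (.inr (.inr (.inr z))))))) = 0)))))) := by
    rw [fc_sum, fc_sum, fc_sum, fc_sum, fc_sum, fc_sum]
  have e1 : fc (fun z : F × F => ok F (.inl z) ∧ φ (gv F (.inl z)) = 0)
      + (if φ (vP F) = 0 then 1 else 0)
      = n2v F (φ (vW1 F)) (φ (vW2 F)) (φ (vP F)) := by
    rw [← cnt2'' F (φ (vW1 F)) (φ (vW2 F)) (φ (vP F))]
    congr 1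
    apply fc_congr
    intro z
    simp only [ok, gv, map_add, map_smul, smul_eq_mul, ne_eq]
  have e2 : fc (fun z : Fˣ × F × F => ok F (.inr (.inl z)) ∧ φ (gv F (.inr (.inl z))) = 0)
      = ∑ t : Fˣ, n2v F (φ (vW1 F)) (φ (vW2 F)) (φ (vB F t)) := by
    refine Eq.trans (fc_congr (fun z => ?_))
      (Eq.trans (fc_prod (fun (t : Fˣ) (y : F × F) =>
        y.1 * φ (vW1 F) + y.2 * φ (vW2 F) + φ (vB F t) = 0))
      (Finset.sum_congr rfl (fun t _ => cnt2 F _ _ _)))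
    simp only [ok, gv, map_add, map_smul, smul_eq_mul, true_and]
  have e3 : fc (fun z : Fˣ × F × F => ok F (.inr (.inr (.inl z))) ∧ φ (gv F (.inr (.inr (.inl z)))) = 0)
      + (∑ t : Fˣ, n1v F (φ (vP F)) (φ (vX2 F) + (t : F) * φ (vX1 F)))
      = ∑ t : Fˣ, n2v F (φ (vP F)) (φ (vD2 F)) (φ (vX2 F) + (t : F) * φ (vX1 F)) := by
    have h1 : fc (fun z : Fˣ × F × F => ok F (.inr (.inr (.inl z))) ∧ φ (gv F (.inr (.inr (.inl z)))) = 0)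
        = ∑ t : Fˣ, fc (fun y : F × F => y.2 ≠ 0 ∧
            y.1 * φ (vP F) + y.2 * φ (vD2 F) + (φ (vX2 F) + (t : F) * φ (vX1 F)) = 0) := by
      refine Eq.trans (fc_congr (fun z => ?_))
        (fc_prod (fun (t : Fˣ) (y : F × F) => y.2 ≠ 0 ∧
          y.1 * φ (vP F) + y.2 * φ (vD2 F) + (φ (vX2 F) + (t : F) * φ (vX1 F)) = 0))
      simp only [ok, gv, map_add, map_smul, smul_eq_mul, ne_eq]
    rw [h1, ← Finset.sum_add_distrib]
    exact Finset.sum_congr rfl (fun t _ => cnt2' F _ _ _)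
  have e4 : fc (fun z : F × F => ok F (.inr (.inr (.inr (.inl z)))) ∧ φ (gv F (.inr (.inr (.inr (.inl z))))) = 0)
      = n2v F (φ (vP F)) (φ (vD2 F)) (φ (vW2 F) + φ (vX1 F)) := by
    rw [← cnt2 F (φ (vP F)) (φ (vD2 F)) (φ (vW2 F) + φ (vX1 F))]
    apply fc_congr
    intro z
    simp only [ok, gv, map_add, map_smul, smul_eq_mul, true_and]
  have e5 : fc (fun z : F × F => ok F (.inr (.inr (.inr (.inr (.inl z))))) ∧ φ (gv F (.inr (.inr (.inr (.inr (.inl z)))))) = 0)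
      + n1v F (φ (vP F)) (φ (vX1 F))
      = n2v F (φ (vP F)) (φ (vD3 F)) (φ (vX1 F)) := by
    rw [← cnt2' F (φ (vP F)) (φ (vD3 F)) (φ (vX1 F))]
    congr 1
    apply fc_congr
    intro z
    simp only [ok, gv, map_add, map_smul, smul_eq_mul, ne_eq]
  have e6 : fc (fun z : F × F => ok F (.inr (.inr (.inr (.inr (.inr (.inl z)))))) ∧ φ (gv F (.inr (.inr (.inr (.inr (.inr (.inl z))))))) = 0)
      + n1v F (φ (vP F)) (φ (vX2 F))
      = n2v F (φ (vP F)) (φ (vD3 F)) (φ (vX2 F)) := by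
    rw [← cnt2' F (φ (vP F)) (φ (vD3 F)) (φ (vX2 F))]
    congr 1
    apply fc_congr
    intro z
    simp only [ok, gv, map_add, map_smul, smul_eq_mul, ne_eq]
  have e7 : fc (fun z : Fˣ × F × F => ok F (.inr (.inr (.inr (.inr (.inr (.inr z)))))) ∧ φ (gv F (.inr (.inr (.inr (.inr (.inr (.inr z))))))) = 0)
      = ∑ t : Fˣ, (if t = 1 then 0
          else n2v F (φ (vP F)) (φ (vD3 F)) (φ (vW1 F) + (t : F) * φ (vX2 F))) := by
    refine Eq.trans (fc_congr (fun z => ?_))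
      (Eq.trans (fc_prod (fun (t : Fˣ) (y : F × F) => ¬ t = 1 ∧
        y.1 * φ (vP F) + y.2 * φ (vD3 F) + (φ (vW1 F) + (t : F) * φ (vX2 F)) = 0)) ?_)
    · simp only [ok, gv, map_add, map_smul, smul_eq_mul, ne_eq]
    · refine Finset.sum_congr rfl (fun t _ => ?_)
      by_cases ht : t = 1
      · rw [if_pos ht]
        refine Eq.trans (fc_congr (fun y => ?_)) fc_false
        simp [ht]
      · rw [if_neg ht]
        refine Eq.trans (fc_congr (fun y => ?_)) (cnt2 F _ _ _)
        simp [ht]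
  -- the three group congruences
  have HA := sumGA F (φ (vW1 F)) (φ (vW2 F)) (φ (vP F)) (fun t => φ (vB F t))
  have HB := sumGA F (φ (vP F)) (φ (vD2 F)) (φ (vW2 F) + φ (vX1 F))
    (fun t => φ (vX2 F) + (t : F) * φ (vX1 F))
  have HC := sumGC F (φ (vP F)) (φ (vD3 F)) (φ (vX1 F)) (φ (vX2 F))
    (fun t => φ (vW1 F) + (t : F) * φ (vX2 F))
  have HX := sumSP F (φ (vP F)) (φ (vX1 F)) (φ (vX2 F))
  -- assemble
  have hkey : fc (fun w : Om F => ok F w ∧ φ (gv F w) = 0)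
      + ((if φ (vP F) = 0 then 1 else 0) +
        ((∑ t : Fˣ, n1v F (φ (vP F)) (φ (vX2 F) + (t : F) * φ (vX1 F)))
          + n1v F (φ (vP F)) (φ (vX1 F)) + n1v F (φ (vP F)) (φ (vX2 F))))
      = (n2v F (φ (vW1 F)) (φ (vW2 F)) (φ (vP F)) + ∑ t : Fˣ, n2v F (φ (vW1 F)) (φ (vW2 F)) (φ (vB F t)))
        + ((n2v F (φ (vP F)) (φ (vD2 F)) (φ (vW2 F) + φ (vX1 F)) + ∑ t : Fˣ, n2v F (φ (vP F)) (φ (vD2 F)) (φ (vX2 F) + (t : F) * φ (vX1 F)))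
        + (n2v F (φ (vP F)) (φ (vD3 F)) (φ (vX1 F)) + n2v F (φ (vP F)) (φ (vD3 F)) (φ (vX2 F))
            + ∑ t : Fˣ, (if t = 1 then 0 else n2v F (φ (vP F)) (φ (vD3 F)) (φ (vW1 F) + (t : F) * φ (vX2 F))))) := by
    omega
  have H0 : fc (fun w : Om F => ok F w ∧ φ (gv F w) = 0)
      + ((if φ (vP F) = 0 then 1 else 0) +
        ((∑ t : Fˣ, n1v F (φ (vP F)) (φ (vX2 F) + (t : F) * φ (vX1 F)))
          + n1v F (φ (vP F)) (φ (vX1 F)) + n1v F (φ (vP F)) (φ (vX2 F))))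
      ≡ 0 [MOD (Fintype.card F) ^ 2] := by
    rw [hkey]
    simpa using (HA.add (HB.add HC))
  -- the target congruence
  have hIq : (Iset F).card + (Fintype.card F + 1)
      = Fintype.card F ^ 2 * (3 * Fintype.card F - 1) := by
    have haux : Fintype.card F ^ 2 * (3 * Fintype.card F - 1) + Fintype.card F ^ 2
        = 3 * Fintype.card F ^ 3 := by
      zify [show 1 ≤ 3 * Fintype.card F by omega]
      ring
    have hcard := card_Iset F
    omega
  have HT : (Iset F).card + (Fintype.card F + 1) ≡ 0 [MOD (Fintype.card F) ^ 2] := by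
    rw [hIq]
    exact Nat.modEq_zero_iff_dvd.mpr (Dvd.intro _ rfl)
  -- combine
  have step1 : fc (fun w : Om F => ok F w ∧ φ (gv F w) = 0) + (Fintype.card F + 1)
      ≡ (Iset F).card + (Fintype.card F + 1) [MOD (Fintype.card F) ^ 2] := by
    calc fc (fun w : Om F => ok F w ∧ φ (gv F w) = 0) + (Fintype.card F + 1)
        ≡ fc (fun w : Om F => ok F w ∧ φ (gv F w) = 0)
          + ((if φ (vP F) = 0 then 1 else 0) +
            ((∑ t : Fˣ, n1v F (φ (vP F)) (φ (vX2 F) + (t : F) * φ (vX1 F)))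
              + n1v F (φ (vP F)) (φ (vX1 F)) + n1v F (φ (vP F)) (φ (vX2 F))))
          [MOD (Fintype.card F) ^ 2] := Nat.ModEq.add_left _ HX.symm
      _ ≡ 0 [MOD (Fintype.card F) ^ 2] := H0
      _ ≡ (Iset F).card + (Fintype.card F + 1) [MOD (Fintype.card F) ^ 2] := HT.symm
  exact Nat.ModEq.add_right_cancel' _ step1

-- ## the point set and its properties

lemma main_pointset : IsPointSet (Cset F) := by
  intro S hS
  simp only [Cset, Finset.mem_image] at hS
  obtain ⟨w, _, rfl⟩ := hS
  exact finrank_span_singleton (gv_ne_zero F w)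

lemma Cset_card_eq : (Cset F).card = (Iset F).card :=
  Finset.card_image_of_injOn (fun w hw w' hw' => gv_injOn F w hw w' hw')

lemma main_card : (Cset F).card
    = 3 * Fintype.card F ^ 3 - Fintype.card F ^ 2 - Fintype.card F - 1 := by
  have h1 := card_Iset F
  have h2 := Cset_card_eq F
  omega

lemma main_divisible : DivisibleSet ((Fintype.card F) ^ 2) (Cset F) := by
  intro H hH
  have hfr : Module.finrank F (Fin (Fintype.card F + 6) → F) = Fintype.card F + 6 := by
    rw [Module.finrank_pi, Fintype.card_fin]
  have hH' : Module.finrank F H = Fintype.card F + 5 := by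
    rw [IsHyperplane] at hH
    rw [hH, hfr]
    omega
  have hquot := Submodule.finrank_quotient_add_finrank H
  rw [hfr, hH'] at hquot
  have h1 : Module.finrank F ((Fin (Fintype.card F + 6) → F) ⧸ H) = 1 := by omega
  let e : ((Fin (Fintype.card F + 6) → F) ⧸ H) ≃ₗ[F] F :=
    LinearEquiv.ofFinrankEq _ _ (by rw [h1, Module.finrank_self])
  set φ : (Fin (Fintype.card F + 6) → F) →ₗ[F] F := (e : _ →ₗ[F] F).comp H.mkQ with hφ
  have hmem : ∀ x, x ∈ H ↔ φ x = 0 := by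
    intro x
    rw [hφ]
    simp only [LinearMap.coe_comp, Function.comp_apply, LinearEquiv.coe_coe,
      LinearEquiv.map_eq_zero_iff, Submodule.mkQ_apply, Submodule.Quotient.mk_eq_zero]
  have hC1 : interCard (Cset F) H = fc (fun w => ok F w ∧ φ (gv F w) = 0) := by
    rw [interCard]
    have himg : (Cset F).filter (fun P => P ≤ H)
        = ((Iset F).filter (fun w => gv F w ∈ H)).image (fun w => Submodule.span F {gv F w}) := by
      ext S
      simp only [Cset, Finset.mem_filter, Finset.mem_image]
      constructor
      · rintro ⟨⟨w, hw, rfl⟩, hle⟩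
        exact ⟨w, ⟨hw, (Submodule.span_singleton_le_iff_mem _ _).mp hle⟩, rfl⟩
      · rintro ⟨w, ⟨hw, hmemw⟩, rfl⟩
        exact ⟨⟨w, hw, rfl⟩, (Submodule.span_singleton_le_iff_mem _ _).mpr hmemw⟩
    rw [himg, Finset.card_image_of_injOn
      (fun w hw w' hw' hsp => gv_injOn F w (Finset.mem_of_mem_filter _ hw) w'
        (Finset.mem_of_mem_filter _ hw') hsp)]
    rw [Iset, Finset.filter_filter, fc_eq_card]
    exact fc_congr (fun w => and_congr Iff.rfl (hmem (gv F w)))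
  rw [hC1, Cset_card_eq]
  exact keyCount F φ

-- ## the span of the configuration is everything

lemma gv_mem_sup {w : Om F} (hw : ok F w) : gv F w ∈ (Cset F).sup id := by
  have hC : Submodule.span F {gv F w} ∈ Cset F := by
    apply Finset.mem_image_of_mem
    rw [Iset, Finset.mem_filter]
    exact ⟨mem_univ _, hw⟩
  exact Finset.le_sup (f := id) hC (Submodule.mem_span_singleton_self _)

lemma main_sup : (Cset F).sup id = ⊤ := by
  have hq2 : 2 ≤ Fintype.card F := Fintype.one_lt_card
  set S := (Cset F).sup id with hS
  rw [eq_top_iff]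
  -- basic memberships from the families
  have A1 : ∀ a b : F, (a, b) ≠ ((0 : F), (0 : F)) →
      a • vW1 F + b • vW2 F + vP F ∈ S := fun a b h => gv_mem_sup F (w := .inl (a, b)) h
  have hw1p : vW1 F + vP F ∈ S := by
    have := A1 1 0 (by simp)
    simpa using this
  have hw2p : vW2 F + vP F ∈ S := by
    have := A1 0 1 (by simp)
    simpa using this
  have hw12p : vW1 F + vW2 F + vP F ∈ S := by
    have := A1 1 1 (by simp)
    simpa [add_assoc] using this
  have hP : vP F ∈ S := by
    have h : vP F = (vW1 F + vP F) + (vW2 F + vP F) - (vW1 F + vW2 F + vP F) := by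
      abel
    rw [h]
    exact S.sub_mem (S.add_mem hw1p hw2p) hw12p
  have hW1 : vW1 F ∈ S := by
    have h : vW1 F = (vW1 F + vP F) - vP F := by abel
    rw [h]
    exact S.sub_mem hw1p hP
  have hW2 : vW2 F ∈ S := by
    have h : vW2 F = (vW2 F + vP F) - vP F := by abel
    rw [h]
    exact S.sub_mem hw2p hP
  have hB : ∀ t : Fˣ, vB F t ∈ S := by
    intro t
    have := gv_mem_sup F (w := .inr (.inl (t, 0, 0))) trivial
    simpa [gv] using this
  have hw2x1 : vW2 F + vX1 F ∈ S := by
    have := gv_mem_sup F (w := .inr (.inr (.inr (.inl (0, 0))))) trivial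
    simpa [gv] using this
  have hD2 : vD2 F ∈ S := by
    have h2 := gv_mem_sup F (w := .inr (.inr (.inr (.inl (0, 1))))) trivial
    simp only [gv, zero_smul, one_smul, zero_add] at h2
    have h : vD2 F = (vD2 F + (vW2 F + vX1 F)) - (vW2 F + vX1 F) := by abel
    rw [h]
    exact S.sub_mem h2 hw2x1
  have hX1 : vX1 F ∈ S := by
    have h : vX1 F = (vW2 F + vX1 F) - vW2 F := by abel
    rw [h]
    exact S.sub_mem hw2x1 hW2
  have hD3 : vD3 F ∈ S := by
    have h2 := gv_mem_sup F (w := .inr (.inr (.inr (.inr (.inl (0, 1)))))) (by simp [ok])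
    simp only [gv, zero_smul, one_smul, zero_add] at h2
    have h : vD3 F = (vD3 F + vX1 F) - vX1 F := by abel
    rw [h]
    exact S.sub_mem h2 hX1
  have hX2 : vX2 F ∈ S := by
    have h2 := gv_mem_sup F (w := .inr (.inr (.inr (.inr (.inr (.inl (0, 1))))))) (by simp [ok])
    simp only [gv, zero_smul, one_smul, zero_add] at h2
    have h : vX2 F = (vD3 F + vX2 F) - vD3 F := by abel
    rw [h]
    exact S.sub_mem h2 hD3
  -- every basis vector is in S
  have hbasis : ∀ k : K F, eV F k ∈ S := by
    intro k
    rcases k with i | t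
    · fin_cases i
      · exact hP
      · exact hX1
      · exact hX2
      · exact hD2
      · exact hD3
      · exact hW1
      · exact hW2
    · exact hB t
  intro x _
  have hx : x = ∑ j : Fin (Fintype.card F + 6), x j • (Pi.single j 1 : Fin (Fintype.card F + 6) → F) := by
    ext j
    rw [Fintype.sum_apply]
    simp [Pi.single_apply]
  rw [hx]
  apply Submodule.sum_mem
  intro j _
  apply Submodule.smul_mem
  have hj : Pi.single j (1 : F) = eV F ((ep F).symm j) := by
    rw [eV, Equiv.apply_symm_apply]
  rw [hj]
  exact hbasis _

-- ## the final theorem pieces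

lemma main_finrank : Module.finrank F ↥((Cset F).sup id) = Fintype.card F + 6 := by
  rw [main_sup, finrank_top, Module.finrank_pi, Fintype.card_fin]

end Cor410

/-- Corollary 4.10: there exists a `q²`-divisible set of points of cardinality
`3q³ - q² - q - 1` whose span has dimension `k` with `max 8 (q+5) ≤ k ≤ max 8 (2q+3)`. -/
theorem exists_q2_divisible_special (F : Type) [Field F] [Fintype F] (q : ℕ)
    (hq : Fintype.card F = q) :
    ∃ v : ℕ, 2 ≤ v ∧ ∃ C : Finset (Submodule F (Fin v → F)),
      IsPointSet C ∧ DivisibleSet (q ^ 2) C ∧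
      C.card = 3 * q ^ 3 - q ^ 2 - q - 1 ∧
      max 8 (q + 5) ≤ Module.finrank F ↥(C.sup id) ∧
      Module.finrank F ↥(C.sup id) ≤ max 8 (2 * q + 3) := by
  subst hq
  have hq2 : 2 ≤ Fintype.card F := Fintype.one_lt_card
  refine ⟨Fintype.card F + 6, by omega, Cor410.Cset F, Cor410.main_pointset F,
    Cor410.main_divisible F, Cor410.main_card F, ?_, ?_⟩
  · rw [Cor410.main_finrank F]
    omega
  · rw [Cor410.main_finrank F]
    omega
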